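/- For a > b > c > 0, set ε = 1 − c²/b² and δ = 1 − c²/a². Then ∫₀¹ √(1 − δt²) · ₂F₁(1/2, −1/2; 1; ((1−t²)/(1−δt²))·ε) dt = (1−δ)·F₁(1/2; −1/2, 3/2; 3/2; ε, δ) + (δ/3)·F₁(1/2; −1/2, 3/2; 5/2; ε, δ). -/

import Mathlib

open MeasureTheory Real Filter
open scoped ENNReal NNReal


/-- Pochhammer symbol `(a)_n = a(a+1)⋯(a+n-1)`. -/
noncomputable def poch (a : ℝ) (n : ℕ) : ℝ := ∏ i ∈ Finset.range n, (a + i)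

lemma poch_zero (a : ℝ) : poch a 0 = 1 := by simp [poch]

lemma poch_succ (a : ℝ) (n : ℕ) : poch a (n+1) = poch a n * (a + n) := by
  simp [poch, Finset.prod_range_succ]

lemma poch_succ' (a : ℝ) (n : ℕ) : poch a (n+1) = a * poch (a+1) n := by
  rw [poch, Finset.prod_range_succ']
  simp only [Nat.cast_zero, add_zero]
  rw [mul_comm, poch]
  congr 1
  apply Finset.prod_congr rfl
  intro i _
  push_cast; ring

lemma poch_add (a : ℝ) (n m : ℕ) : poch a (n+m) = poch a n * poch (a+n) m := by
  rw [poch, Finset.prod_range_add]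
  congr 1
  apply Finset.prod_congr rfl
  intro i _
  push_cast; ring

lemma poch_one_eq_factorial (n : ℕ) : poch 1 n = n.factorial := by
  induction n with
  | zero => simp [poch]
  | succ k ih => rw [poch_succ, ih]; push_cast [Nat.factorial_succ]; ring

lemma poch_pos {a : ℝ} (ha : 0 < a) (n : ℕ) : 0 < poch a n := by
  apply Finset.prod_pos
  intro i _
  positivity

lemma poch_nonneg {a : ℝ} (ha : 0 ≤ a) (n : ℕ) : 0 ≤ poch a n := by
  apply Finset.prod_nonneg
  intro i _
  positivity

lemma abs_poch_le {s s' : ℝ} (h : |s| ≤ s') (m : ℕ) : |poch s m| ≤ poch s' m := by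
  rw [poch, Finset.abs_prod]
  apply Finset.prod_le_prod (fun i _ => abs_nonneg _)
  intro i _
  calc |s + i| ≤ |s| + i := by
        refine (abs_add_le _ _).trans ?_
        have : |(i:ℝ)| = (i:ℝ) := abs_of_nonneg (by positivity)
        simp [this]
    _ ≤ s' + i := by linarith

lemma poch_le_poch {a b : ℝ} (ha : 0 ≤ a) (h : a ≤ b) (m : ℕ) : poch a m ≤ poch b m := by
  apply Finset.prod_le_prod
  · intro i _; positivity
  · intro i _; linarith

lemma poch_half_ratio (m : ℕ) : poch (1/2) m * (1/2 + m) = 1/2 * poch (3/2) m := by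
  have h1 := poch_succ (1/2) m
  have h2 := poch_succ' (1/2) m
  rw [h1] at h2
  norm_num at h2 ⊢
  linarith [h2]

/-- Ratio-test helper. -/
lemma summable_helper {f : ℕ → ℝ} {w : ℕ → ℝ} {L : ℝ} (hL0 : 0 ≤ L) (hL : L < 1)
    (hw : Filter.Tendsto w Filter.atTop (nhds L))
    (h : ∀ m, |f (m+1)| ≤ w m * |f m|) : Summable f := by
  set r := (L + 1)/2 with hr
  have hr1 : r < 1 := by rw [hr]; linarith
  have hLr : L < r := by rw [hr]; linarith
  have hev : ∀ᶠ m in Filter.atTop, w m ≤ r := hw.eventually_le_const hLr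
  apply summable_of_ratio_norm_eventually_le hr1
  filter_upwards [hev] with m hm
  calc ‖f (m+1)‖ = |f (m+1)| := rfl
    _ ≤ w m * |f m| := h m
    _ ≤ r * ‖f m‖ := by
        apply mul_le_mul_of_nonneg_right hm (abs_nonneg _)

lemma tendsto_aux (c : ℝ) (u : ℝ) :
    Filter.Tendsto (fun m : ℕ => (c + m) / (m + 1) * u) Filter.atTop (nhds u) := by
  have h1 : Filter.Tendsto (fun m : ℕ => (c + m) / (m + 1)) Filter.atTop (nhds 1) := by
    have : (fun m : ℕ => (c + m) / (m + 1)) = fun m : ℕ => (c - 1)/((m:ℝ) + 1) + 1 := by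
      funext m
      have : (m:ℝ) + 1 ≠ 0 := by positivity
      field_simp
      ring
    rw [this]
    have h0 : Filter.Tendsto (fun m : ℕ => (c - 1)/((m:ℝ) + 1)) Filter.atTop (nhds 0) := by
      apply Filter.Tendsto.div_atTop tendsto_const_nhds
      exact Filter.tendsto_atTop_add_const_right _ _ tendsto_natCast_atTop_atTop
    simpa using h0.add tendsto_const_nhds
  simpa using h1.mul_const u

/-- Summability of the binomial series coefficients times a geometric term. -/
lemma summable_poch_pow (s : ℝ) {u : ℝ} (hu0 : 0 ≤ u) (hu : u < 1) :
    Summable (fun m : ℕ => poch s m / m.factorial * u ^ m) := by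
  apply summable_helper (w := fun m => (|s| + m)/(m + 1) * u) (L := u) hu0 hu (tendsto_aux _ _)
  intro m
  have hfac : (0:ℝ) < m.factorial := by positivity
  have hfac1 : ((m+1).factorial : ℝ) = (m.factorial : ℝ) * (m+1) := by
    push_cast [Nat.factorial_succ]; ring
  rw [poch_succ]
  have hm1 : (0:ℝ) < (m:ℝ) + 1 := by positivity
  have heq : |poch s m * (s + ↑m) / ↑(m + 1).factorial * u ^ (m + 1)|
      = |poch s m / m.factorial * u ^ m| * (|s + m| * u / (m+1)) := by
    rw [hfac1, pow_succ]
    simp only [abs_mul, abs_div, abs_of_nonneg hu0, abs_of_nonneg (pow_nonneg hu0 m),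
      abs_of_pos hfac, abs_of_pos hm1]
    field_simp
  rw [heq, mul_comm ((|s| + ↑m) / (↑m + 1) * u) _]
  apply mul_le_mul_of_nonneg_left _ (abs_nonneg _)
  have habs : |s + (m:ℝ)| ≤ |s| + m := by
    refine (abs_add_le _ _).trans ?_
    have hmm : |(m:ℝ)| = (m:ℝ) := abs_of_nonneg (by positivity)
    simp [hmm]
  calc |s + ↑m| * u / (↑m + 1) ≤ (|s| + ↑m) * u / (↑m + 1) := by
        gcongr
    _ = (|s| + ↑m) / (↑m + 1) * u := by ring

lemma summable_poch_deriv (s : ℝ) {r : ℝ} (h0 : 0 ≤ r) (h1 : r < 1) :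
    Summable (fun m : ℕ => |poch s (m+1)| / m.factorial * r ^ m) := by
  have ht := tendsto_aux (|s|+1) r
  apply summable_helper (w := fun m => (|s| + 1 + m)/(m + 1) * r) (L := r) h0 h1 ht
  intro m
  have hm1 : (0:ℝ) < (m:ℝ) + 1 := by positivity
  have hfac : (0:ℝ) < m.factorial := by positivity
  have hfac1 : ((m+1).factorial : ℝ) = (m.factorial : ℝ) * (m+1) := by
    push_cast [Nat.factorial_succ]; ring
  have habs : |s + ((m:ℝ)+1)| ≤ |s| + 1 + m := by
    refine (abs_add_le _ _).trans ?_
    have hmm : |(m:ℝ)+1| = (m:ℝ)+1 := abs_of_nonneg (by positivity)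
    rw [hmm]; ring_nf; rfl
  have heq : |(|poch s (m+1+1)| / ↑(m+1).factorial * r ^ (m+1))|
      = |(|poch s (m+1)| / ↑m.factorial * r ^ m)| * (|s + ((m:ℝ)+1)| * r / (m+1)) := by
    have : poch s (m+1+1) = poch s (m+1) * (s + (m+1)) := by
      rw [poch_succ]; push_cast; ring
    rw [this, hfac1, pow_succ]
    simp only [abs_mul, abs_div, abs_abs, abs_of_nonneg h0, abs_of_nonneg (pow_nonneg h0 m),
      abs_of_pos hfac, abs_of_pos hm1]
    field_simp
  rw [heq, mul_comm ((|s| + 1 + ↑m) / (↑m + 1) * r) _]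
  apply mul_le_mul_of_nonneg_left _ (abs_nonneg _)
  calc |s + ((m:ℝ)+1)| * r / (↑m + 1) ≤ (|s| + 1 + ↑m) * r / (↑m + 1) := by gcongr
    _ = (|s| + 1 + ↑m) / (↑m + 1) * r := by ring

noncomputable def Fb (s : ℝ) (x : ℝ) : ℝ := ∑' m : ℕ, poch s m / m.factorial * x ^ m
noncomputable def Db (s : ℝ) (x : ℝ) : ℝ := ∑' m : ℕ, poch s (m+1) / m.factorial * x ^ m

lemma summable_Db (s : ℝ) {x : ℝ} (hx : |x| < 1) :
    Summable (fun m : ℕ => poch s (m+1) / m.factorial * x ^ m) := by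
  apply Summable.of_norm_bounded (summable_poch_deriv s (abs_nonneg x) hx)
  intro m
  simp only [norm_mul, norm_div, norm_pow, Real.norm_eq_abs, Nat.abs_cast, abs_abs]
  exact le_refl _

lemma hasDerivAt_Fb (s : ℝ) {x : ℝ} (hx : |x| < 1) : HasDerivAt (Fb s) (Db s x) x := by
  set r := (|x| + 1)/2 with hrdef
  have hxr : |x| < r := by rw [hrdef]; linarith
  have hr1 : r < 1 := by rw [hrdef]; linarith
  have hr0 : 0 < r := by have := abs_nonneg x; rw [hrdef]; linarith
  set g : ℕ → ℝ → ℝ := fun n y => poch s n / n.factorial * y ^ n with hgdef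
  set g' : ℕ → ℝ → ℝ := fun n y => poch s n / n.factorial * (n * y ^ (n-1)) with hg'def
  set u : ℕ → ℝ := fun n => |poch s n| / n.factorial * (n * r ^ (n-1)) with hudef
  have hu : Summable u := by
    rw [← summable_nat_add_iff 1]
    have : (fun n => u (n+1)) = fun m => |poch s (m+1)| / m.factorial * r ^ m := by
      funext m
      rw [hudef]
      simp only [Nat.add_sub_cancel]
      have hfac1 : ((m+1).factorial : ℝ) = (m.factorial : ℝ) * (m+1) := by
        push_cast [Nat.factorial_succ]; ring
      rw [hfac1]
      have hm1 : (0:ℝ) < (m:ℝ) + 1 := by positivity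
      have hfac : (0:ℝ) < m.factorial := by positivity
      push_cast
      field_simp
    rw [this]
    exact summable_poch_deriv s hr0.le hr1
  have hg : ∀ n y, y ∈ Set.Ioo (-r) r → HasDerivAt (g n) (g' n y) y := by
    intro n y _
    exact (hasDerivAt_pow n y).const_mul _
  have hg' : ∀ n y, y ∈ Set.Ioo (-r) r → ‖g' n y‖ ≤ u n := by
    intro n y hy
    have hyr : |y| ≤ r := by
      rw [abs_le]; exact ⟨hy.1.le, hy.2.le⟩
    have heq : ‖g' n y‖ = |poch s n| / n.factorial * (n * |y| ^ (n-1)) := by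
      simp only [hg'def, Real.norm_eq_abs, abs_mul, abs_div, Nat.abs_cast, abs_pow]
    rw [heq, hudef]
    apply mul_le_mul_of_nonneg_left _ (by positivity)
    apply mul_le_mul_of_nonneg_left _ (by positivity)
    exact pow_le_pow_left₀ (abs_nonneg y) hyr _
  have hg0 : Summable fun n => g n 0 := by
    have := summable_poch_pow s (le_refl 0) one_pos
    exact this
  have key := hasDerivAt_tsum_of_isPreconnected hu isOpen_Ioo (convex_Ioo (-r) r).isPreconnected
    hg hg' (by constructor <;> [linarith; exact hr0] : (0:ℝ) ∈ Set.Ioo (-r) r) hg0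
    (by rw [Set.mem_Ioo, ← abs_lt]; exact hxr)
  have hsum' : Summable (fun n => g' n x) := by
    apply Summable.of_norm_bounded hu
    intro n
    exact hg' n x (by rw [Set.mem_Ioo, ← abs_lt]; exact hxr)
  have hDb : (∑' n, g' n x) = Db s x := by
    rw [Summable.tsum_eq_zero_add hsum']
    have h0 : g' 0 x = 0 := by simp [hg'def]
    rw [h0, zero_add, Db]
    apply tsum_congr
    intro m
    simp only [hg'def, Nat.add_sub_cancel]
    have hfac1 : ((m+1).factorial : ℝ) = (m.factorial : ℝ) * (m+1) := by
      push_cast [Nat.factorial_succ]; ring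
    rw [hfac1]
    have hm1 : (0:ℝ) < (m:ℝ) + 1 := by positivity
    have hfac : (0:ℝ) < m.factorial := by positivity
    push_cast
    field_simp
  rw [← hDb]
  exact key

lemma summable_Fb (s : ℝ) {x : ℝ} (hx0 : 0 ≤ x) (hx : x < 1) :
    Summable (fun m : ℕ => poch s m / m.factorial * x ^ m) := summable_poch_pow s hx0 hx

lemma ode_Fb (s : ℝ) {x : ℝ} (hx0 : 0 ≤ x) (hx1 : x < 1) :
    (1 - x) * Db s x = s * Fb s x := by
  have hxabs : |x| < 1 := by rw [abs_of_nonneg hx0]; exact hx1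
  have hD : Summable (fun m : ℕ => poch s (m+1) / m.factorial * x ^ m) := summable_Db s hxabs
  set h : ℕ → ℝ := fun m => poch s m * m / m.factorial * x ^ m with hhdef
  have hh : Summable h := by
    rw [← summable_nat_add_iff 1]
    apply Summable.of_norm_bounded (hD.abs.mul_right |x|)
    intro m
    have heq : h (m+1) = (poch s (m+1) / m.factorial * x ^ m) * x := by
      rw [hhdef]
      have hfac1 : ((m+1).factorial : ℝ) = (m.factorial : ℝ) * (m+1) := by
        push_cast [Nat.factorial_succ]; ring
      simp only
      rw [hfac1, pow_succ]
      have hfac : (0:ℝ) < m.factorial := by positivity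
      push_cast
      field_simp
    rw [Real.norm_eq_abs, heq, abs_mul]
  have hxD : x * Db s x = ∑' m : ℕ, h m := by
    rw [Db, ← tsum_mul_left, Summable.tsum_eq_zero_add hh]
    have h0 : h 0 = 0 := by simp [hhdef]
    rw [h0, zero_add]
    apply tsum_congr
    intro m
    have hfac1 : ((m+1).factorial : ℝ) = (m.factorial : ℝ) * (m+1) := by
      push_cast [Nat.factorial_succ]; ring
    simp only [hhdef]
    rw [hfac1, pow_succ]
    have hfac : (0:ℝ) < m.factorial := by positivity
    have hm1 : (0:ℝ) < (m:ℝ) + 1 := by positivity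
    push_cast
    field_simp
  have hsub : Db s x - x * Db s x = s * Fb s x := by
    rw [hxD, Db, ← Summable.tsum_sub hD hh]
    have : ∀ m : ℕ, poch s (m+1) / m.factorial * x ^ m - h m
        = s * (poch s m / m.factorial * x ^ m) := by
      intro m
      simp only [hhdef]
      rw [poch_succ]
      have hfac : (0:ℝ) < m.factorial := by positivity
      field_simp
      ring
    rw [tsum_congr this, tsum_mul_left, Fb]
  linarith [hsub]

lemma binomial_hasSum (s : ℝ) {u : ℝ} (hu0 : 0 ≤ u) (hu1 : u < 1) :
    HasSum (fun m : ℕ => poch s m / m.factorial * u ^ m) ((1 - u) ^ (-s) : ℝ) := by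
  have h1u : (0:ℝ) < 1 - u := by linarith
  set G : ℝ → ℝ := fun x => Fb s x * (1 - x) ^ s with hGdef
  have hG : ∀ x ∈ Set.Icc (0:ℝ) u, HasDerivAt G 0 x := by
    intro x hx
    have hx0 : 0 ≤ x := hx.1
    have hx1 : x < 1 := lt_of_le_of_lt hx.2 hu1
    have hxabs : |x| < 1 := by rw [abs_of_nonneg hx0]; exact hx1
    have h1x : (0:ℝ) < 1 - x := by linarith
    have hF := hasDerivAt_Fb s hxabs
    have hlin : HasDerivAt (fun y : ℝ => 1 - y) (-1) x := by
      simpa using (hasDerivAt_id x).const_sub 1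
    have hR := hlin.rpow_const (p := s) (Or.inl h1x.ne')
    have hprod := hF.mul hR
    have hode := ode_Fb s hx0 hx1
    have hval : Db s x * (1 - x) ^ s + Fb s x * (-1 * s * (1 - x) ^ (s - 1)) = 0 := by
      have hsplit : (1 - x) ^ s = (1 - x) ^ (s - 1) * (1 - x) := by
        have h := Real.rpow_add h1x (s-1) 1
        rw [Real.rpow_one] at h
        simpa using h
      rw [hsplit]
      linear_combination ((1 - x) ^ (s - 1)) * hode
    rw [← hval]
    exact hprod
  have hcont : ContinuousOn G (Set.Icc 0 u) := fun x hx => (hG x hx).continuousAt.continuousWithinAt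
  have hconst := constant_of_has_deriv_right_zero hcont
    (fun x hx => (hG x (Set.Ico_subset_Icc_self hx)).hasDerivWithinAt)
  have hGu : G u = G 0 := hconst u (Set.right_mem_Icc.mpr hu0)
  have hF0 : Fb s 0 = 1 := by
    rw [Fb, tsum_eq_single 0]
    · simp [poch_zero]
    · intro m hm
      simp [zero_pow hm]
  have hG0 : G 0 = 1 := by
    rw [hGdef]; simp [hF0]
  have hFu : Fb s u = (1 - u) ^ (-s) := by
    have h1 : Fb s u * (1 - u) ^ s = 1 := by
      rw [show Fb s u * (1 - u) ^ s = G u from rfl, hGu, hG0]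
    rw [Real.rpow_neg h1u.le]
    exact (inv_eq_of_mul_eq_one_right (by rw [mul_comm]; exact h1)).symm
  have hsummable := summable_poch_pow s hu0 hu1
  rw [← hFu]
  exact hsummable.hasSum

lemma integral_Inm (n : ℕ) : ∀ m : ℕ,
    ∫ t in (0:ℝ)..1, t^(2*m) * (1 - t^2)^n
      = (n.factorial : ℝ) * poch (1/2) m / poch (3/2) (n+m) := by
  induction n with
  | zero =>
    intro m
    simp only [pow_zero, mul_one, integral_pow, Nat.factorial_zero, Nat.cast_one, one_mul,
      zero_add]
    have hr := poch_half_ratio m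
    have hpos : (0:ℝ) < poch (3/2) m := poch_pos (by norm_num) m
    have hm : (0:ℝ) < 1/2 + m := by positivity
    rw [one_pow, zero_pow (by omega : 2*m+1 ≠ 0)]
    have h1 : poch (1/2) m = 1/2 * poch (3/2) m / (1/2 + m) := by
      field_simp at hr ⊢
      linarith [hr]
    rw [h1]
    push_cast
    field_simp
    ring
  | succ n ih =>
    intro m
    -- FTC step
    set φ : ℝ → ℝ := fun t => t^(2*m+1) * (1 - t^2)^(n+1) with hφ
    set φ' : ℝ → ℝ := fun t =>
      (2*m+1 : ℝ) * (t^(2*m) * (1 - t^2)^(n+1)) - (2*n+2 : ℝ) * (t^(2*(m+1)) * (1 - t^2)^n)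
      with hφ'
    have hderiv : ∀ t : ℝ, HasDerivAt φ (φ' t) t := by
      intro t
      have h2 : HasDerivAt (fun t : ℝ => 1 - t^2) (-(2*t)) t := by
        simpa using (hasDerivAt_pow 2 t).const_sub 1
      have h3 := h2.pow (n+1)
      have h4 := (hasDerivAt_pow (2*m+1) t).mul h3
      refine h4.congr_deriv ?_
      simp only [hφ', Nat.add_sub_cancel, Pi.pow_apply]
      push_cast
      ring
    have hcont' : Continuous φ' := by
      apply Continuous.sub <;> apply Continuous.mul
      · exact continuous_const
      · exact ((continuous_pow _).mul ((continuous_const.sub (continuous_pow 2)).pow _))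
      · exact continuous_const
      · exact ((continuous_pow _).mul ((continuous_const.sub (continuous_pow 2)).pow _))
    have hFTC := intervalIntegral.integral_eq_sub_of_hasDerivAt
      (f := φ) (f' := φ') (a := 0) (b := 1) (fun t _ => hderiv t)
      (hcont'.intervalIntegrable 0 1)
    have hφ1 : φ 1 = 0 := by simp [hφ]
    have hφ0 : φ 0 = 0 := by simp [hφ]
    rw [hφ1, hφ0, sub_zero] at hFTC
    have hint1 : IntervalIntegrable (fun t : ℝ => t^(2*m) * (1 - t^2)^(n+1)) volume 0 1 :=
      (((continuous_pow _).mul ((continuous_const.sub (continuous_pow 2)).pow _))).intervalIntegrable 0 1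
    have hint2 : IntervalIntegrable (fun t : ℝ => t^(2*(m+1)) * (1 - t^2)^n) volume 0 1 :=
      (((continuous_pow _).mul ((continuous_const.sub (continuous_pow 2)).pow _))).intervalIntegrable 0 1
    have hsplit : ∫ t in (0:ℝ)..1, φ' t
        = ((2*m+1 : ℝ) * ∫ t in (0:ℝ)..1, t^(2*m) * (1 - t^2)^(n+1))
          - ((2*n+2 : ℝ) * ∫ t in (0:ℝ)..1, t^(2*(m+1)) * (1 - t^2)^n) := by
      rw [hφ']
      rw [intervalIntegral.integral_sub ((hint1.const_mul _)) ((hint2.const_mul _)),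
        intervalIntegral.integral_const_mul, intervalIntegral.integral_const_mul]
    rw [hFTC] at hsplit
    have hkey : ((2*m+1 : ℝ) * ∫ t in (0:ℝ)..1, t^(2*m) * (1 - t^2)^(n+1))
        = (2*n+2 : ℝ) * ∫ t in (0:ℝ)..1, t^(2*(m+1)) * (1 - t^2)^n := by linarith
    rw [ih (m+1)] at hkey
    have hm1 : (0:ℝ) < 2*(m:ℝ)+1 := by positivity
    have hidx : n + (m+1) = n + 1 + m := by omega
    rw [hidx] at hkey
    have hfac : ((n+1).factorial : ℝ) = (n.factorial : ℝ) * (n+1) := by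
      push_cast [Nat.factorial_succ]; ring
    have hps : poch (1/2) (m+1) = poch (1/2) m * (1/2 + m) := poch_succ _ _
    rw [hps] at hkey
    rw [hfac]
    have : (2*(m:ℝ)+1) * ∫ t in (0:ℝ)..1, t^(2*m) * (1 - t^2)^(n+1)
        = (2*(m:ℝ)+1) * ((n.factorial : ℝ) * (n+1) * poch (1/2) m / poch (3/2) (n+1+m)) := by
      rw [hkey]
      have hpos : (0:ℝ) < poch (3/2) (n+1+m) := poch_pos (by norm_num) _
      field_simp
      ring
    have := mul_left_cancel₀ (by positivity : (2*(m:ℝ)+1) ≠ 0) this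
    rw [this]

noncomputable def Acoef (n : ℕ) : ℝ := poch (1/2) n * poch (-(1/2)) n / (poch 1 n * n.factorial)

noncomputable def aseq (n : ℕ) : ℝ := poch (1/2) n / n.factorial

lemma aseq_nonneg (n : ℕ) : 0 ≤ aseq n := by
  have := poch_pos (by norm_num : (0:ℝ) < 1/2) n
  have : (0:ℝ) < n.factorial := by positivity
  unfold aseq
  positivity

lemma aseq_succ (n : ℕ) : aseq (n+1) = aseq n * ((1/2 + n)/(n+1)) := by
  unfold aseq
  rw [poch_succ]
  have hfac1 : ((n+1).factorial : ℝ) = (n.factorial : ℝ) * (n+1) := by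
    push_cast [Nat.factorial_succ]; ring
  rw [hfac1, div_mul_div_comm]

lemma aseq_sq (n : ℕ) : aseq n ^ 2 ≤ 1/(n+1) := by
  induction n with
  | zero => simp [aseq, poch_zero]
  | succ n ih =>
    rw [aseq_succ, mul_pow]
    have h1 : (0:ℝ) < (n:ℝ)+1 := by positivity
    have h2 : (0:ℝ) < (n:ℝ)+2 := by positivity
    have key : ((1/2 + (n:ℝ))/(n+1))^2 * (1/((n:ℝ)+1)) ≤ 1/((n:ℝ)+2) := by
      rw [div_pow, div_mul_div_comm, div_le_div_iff₀ (by positivity) h2]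
      nlinarith
    calc aseq n ^2 * ((1/2 + (n:ℝ))/(n+1))^2 ≤ (1/((n:ℝ)+1)) * ((1/2 + (n:ℝ))/(n+1))^2 := by
          apply mul_le_mul_of_nonneg_right ih (by positivity)
      _ ≤ 1/((n:ℝ)+2) := by rw [mul_comm]; exact key
      _ = 1/(((n+1:ℕ):ℝ)+1) := by push_cast; ring_nf
    
lemma aseq_le_one (n : ℕ) : aseq n ≤ 1 := by
  induction n with
  | zero => simp [aseq, poch_zero]
  | succ n ih =>
    rw [aseq_succ]
    have h1 : (1/2 + (n:ℝ))/((n:ℝ)+1) ≤ 1 := by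
      rw [div_le_one (by positivity)]; linarith
    nlinarith [aseq_nonneg n]

lemma aseq_mono (n : ℕ) : aseq (n+1) ≤ aseq n := by
  rw [aseq_succ]
  have h1 : (1/2 + (n:ℝ))/((n:ℝ)+1) ≤ 1 := by
    rw [div_le_one (by positivity)]; linarith
  nlinarith [aseq_nonneg n]

lemma poch_neg_half_succ (n : ℕ) : poch (-(1/2)) (n+1) = -(1/2) * poch (1/2) n := by
  rw [poch_succ']
  norm_num

lemma abs_Acoef_succ_le (n : ℕ) : |Acoef (n+1)| ≤ 1/((n:ℝ)+1)^2 := by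
  have hfac : (0:ℝ) < (n+1).factorial := by positivity
  have hfacn : (0:ℝ) < n.factorial := by positivity
  have hA : |Acoef (n+1)| = aseq (n+1) * aseq n * (1/(2*((n:ℝ)+1))) := by
    unfold Acoef
    rw [poch_neg_half_succ, poch_one_eq_factorial]
    have hfac1 : ((n+1).factorial : ℝ) = (n.factorial : ℝ) * (n+1) := by
      push_cast [Nat.factorial_succ]; ring
    rw [abs_div, abs_mul]
    rw [abs_of_nonneg (poch_nonneg (by norm_num) (n+1))]
    rw [abs_mul, abs_of_nonpos (by norm_num : (-(1/2):ℝ) ≤ 0),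
      abs_of_nonneg (poch_nonneg (by norm_num : (0:ℝ) ≤ 1/2) n)]
    rw [abs_of_pos (by positivity : (0:ℝ) < ((n+1).factorial:ℝ) * ((n+1).factorial:ℝ))]
    unfold aseq
    rw [hfac1]
    have hne1 : ((n:ℝ)+1) ≠ 0 := by positivity
    have hne2 : (n.factorial:ℝ) ≠ 0 := by positivity
    field_simp [hne1, hne2]
    try ring
    try exact Or.inl trivial
  rw [hA]
  have h1 : aseq (n+1) * aseq n ≤ 1/((n:ℝ)+1) := by
    calc aseq (n+1) * aseq n ≤ aseq n * aseq n := by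
          apply mul_le_mul_of_nonneg_right (aseq_mono n) (aseq_nonneg n)
      _ = aseq n ^ 2 := by ring
      _ ≤ 1/((n:ℝ)+1) := aseq_sq n
  have h2 : (0:ℝ) < (n:ℝ)+1 := by positivity
  calc aseq (n+1) * aseq n * (1/(2*((n:ℝ)+1))) ≤ (1/((n:ℝ)+1)) * (1/(2*((n:ℝ)+1))) := by
        apply mul_le_mul_of_nonneg_right h1 (by positivity)
    _ ≤ 1/((n:ℝ)+1)^2 := by
        rw [div_mul_div_comm, div_le_div_iff₀ (by positivity) (by positivity)]
        nlinarith
  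
lemma summable_abs_Acoef : Summable (fun n => |Acoef n|) := by
  rw [← summable_nat_add_iff 1]
  apply Summable.of_nonneg_of_le (fun n => abs_nonneg _) (fun n => abs_Acoef_succ_le n)
  have h : Summable (fun n : ℕ => 1/((n:ℝ))^2) := by
    have := Real.summable_one_div_nat_pow (p := 2)
    exact this.mpr (by norm_num)
  have h2 := (summable_nat_add_iff 1).mpr h
  apply h2.congr
  intro n
  push_cast
  ring

lemma poch_coupling (n : ℕ) : poch (1/2) n = (1 - 2*n) * poch (-(1/2)) n := by
  have h1 := poch_succ (-(1/2)) n
  have h2 := poch_neg_half_succ n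
  rw [h1] at h2
  linarith [h2]

lemma coeff_id (n m : ℕ) :
    poch (1/2) n * poch (-(1/2)) (n+(m+1)) * poch (1/2) (m+1)
        / (poch (3/2) (n+(m+1)) * n.factorial * (m+1).factorial)
      = poch (1/2) (n+(m+1)) * poch (-(1/2)) n * poch (3/2) (m+1)
          / (poch (3/2) (n+(m+1)) * n.factorial * (m+1).factorial)
        - poch (1/2) (n+m) * poch (-(1/2)) n * poch (3/2) m
          / (poch (3/2) (n+m) * n.factorial * m.factorial)
        + 1/3 * (poch (1/2) (n+m) * poch (-(1/2)) n * poch (3/2) m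
          / (poch (5/2) (n+m) * n.factorial * m.factorial)) := by
  have hidx : n + (m+1) = (n+m) + 1 := by omega
  rw [hidx]
  set k := n + m with hk
  -- rewrite all (k+1)- and (m+1)-pochhammers
  have e1 : poch (-(1/2)) (k+1) = -(1/2) * poch (1/2) k := poch_neg_half_succ k
  have e2 : poch (1/2) (m+1) = 1/2 * poch (3/2) m := by
    rw [poch_succ']; norm_num
  have e3 : poch (1/2) (k+1) = poch (1/2) k * (1/2 + k) := poch_succ _ _
  have e4 : poch (3/2) (m+1) = poch (3/2) m * (3/2 + m) := poch_succ _ _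
  have e5 : poch (3/2) (k+1) = poch (3/2) k * (3/2 + k) := poch_succ _ _
  have e6 : poch (3/2) (k+1) = 3/2 * poch (5/2) k := by
    rw [poch_succ']; norm_num
  have e7 : poch (5/2) k = 2/3 * (poch (3/2) k * (3/2 + k)) := by
    rw [← e5, e6]; ring
  have e8 : ((m+1).factorial : ℝ) = (m.factorial : ℝ) * (m+1) := by
    push_cast [Nat.factorial_succ]; ring
  have hcoup : poch (1/2) n = (1 - 2*n) * poch (-(1/2)) n := poch_coupling n
  have hkc : (k:ℝ) = (n:ℝ) + m := by rw [hk]; push_cast; ring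
  rw [e1, e2, e3, e4, e5, e7, e8, hcoup, hkc]
  have p1 : (0:ℝ) < poch (3/2) k := poch_pos (by norm_num) k
  have p2 : (0:ℝ) < (n.factorial : ℝ) := by positivity
  have p3 : (0:ℝ) < (m.factorial : ℝ) := by positivity
  have p4 : (0:ℝ) < (3/2 + (n:ℝ) + m) := by positivity
  have p5 : (0:ℝ) < ((m:ℝ)+1) := by positivity
  have h4 : (3/2 + ((n:ℝ) + m)) ≠ 0 := by positivity
  field_simp
  ring

/-- Gauss hypergeometric series `₂F₁(a,b;c;x)`. -/
noncomputable def gaussF (a b c x : ℝ) : ℝ :=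
  ∑' n : ℕ, poch a n * poch b n / (poch c n * n.factorial) * x ^ n

/-- Appell's first hypergeometric function `F₁(α;β,β';γ;x,y)`. -/
noncomputable def appellF1 (α β β' γ x y : ℝ) : ℝ :=
  ∑' p : ℕ × ℕ, poch α (p.1 + p.2) * poch β p.1 * poch β' p.2 /
    (poch γ (p.1 + p.2) * p.1.factorial * p.2.factorial) * x ^ p.1 * y ^ p.2

noncomputable def fterm (E D : ℝ) (p : ℕ × ℕ) (t : ℝ) : ℝ :=
  Acoef p.1 * E ^ p.1 * (1 - t^2) ^ p.1 *
    (poch ((p.1 : ℝ) - 1/2) p.2 / p.2.factorial * (D * t^2) ^ p.2)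

noncomputable def gterm (γ E D : ℝ) (p : ℕ × ℕ) : ℝ :=
  poch (1/2) (p.1 + p.2) * poch (-(1/2)) p.1 * poch (3/2) p.2 /
    (poch (γ) (p.1 + p.2) * p.1.factorial * p.2.factorial) * E ^ p.1 * D ^ p.2

noncomputable def tauTerm (E D : ℝ) (p : ℕ × ℕ) : ℝ :=
  poch (1/2) p.1 * poch (-(1/2)) (p.1 + p.2) * poch (1/2) p.2 /
    (poch (3/2) (p.1 + p.2) * p.1.factorial * p.2.factorial) * E ^ p.1 * D ^ p.2

lemma abs_fterm_le {E D : ℝ} (hE0 : 0 ≤ E) (hD0 : 0 ≤ D) {t : ℝ} (ht : t ∈ Set.Icc (0:ℝ) 1) (n m : ℕ) :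
    |fterm E D (n, m) t|
      ≤ |Acoef n| * E ^ n * (1 - t^2) ^ n * (poch ((n:ℝ) + 1/2) m / m.factorial * (D * t^2) ^ m) := by
  have ht2 : t^2 ≤ 1 := by nlinarith [ht.1, ht.2]
  have h1t : (0:ℝ) ≤ 1 - t^2 := by linarith
  have hu0 : (0:ℝ) ≤ D * t^2 := by positivity
  have habs : |(n:ℝ) - 1/2| ≤ (n:ℝ) + 1/2 := by
    rw [abs_le]; constructor <;> [linarith [Nat.cast_nonneg (α := ℝ) n]; linarith]
  have hple := abs_poch_le habs m
  have heq : |fterm E D (n, m) t|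
      = |Acoef n| * E^n * (1-t^2)^n * (|poch ((n:ℝ)-1/2) m| / m.factorial * (D*t^2)^m) := by
    unfold fterm
    simp only
    rw [abs_mul, abs_mul, abs_mul, abs_mul, abs_div, abs_pow, abs_pow, abs_pow]
    rw [abs_of_nonneg hE0, abs_of_nonneg h1t, abs_of_nonneg hu0, Nat.abs_cast]
  rw [heq]
  have hmf : (0:ℝ) < m.factorial := by positivity
  apply mul_le_mul_of_nonneg_left _ (mul_nonneg (mul_nonneg (abs_nonneg _)
    (pow_nonneg hE0 n)) (pow_nonneg h1t n))
  apply mul_le_mul_of_nonneg_right _ (pow_nonneg hu0 m)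
  exact (div_le_div_iff_of_pos_right hmf).mpr hple

lemma row_hasSum {D : ℝ} (hD0 : 0 ≤ D) (hD1 : D < 1) {t : ℝ} (ht : t ∈ Set.Icc (0:ℝ) 1)
    (s : ℝ) :
    HasSum (fun m : ℕ => poch s m / m.factorial * (D * t^2) ^ m)
      ((1 - D * t^2) ^ (-s) : ℝ) := by
  have ht2 : t^2 ≤ 1 := by nlinarith [ht.1, ht.2]
  have hu0 : (0:ℝ) ≤ D * t^2 := by positivity
  have hu1 : D * t^2 < 1 := by nlinarith
  exact binomial_hasSum _ hu0 hu1

lemma bound_core {E D : ℝ} (hE0 : 0 ≤ E) (hE1 : E < 1) (hD0 : 0 ≤ D) (hD1 : D < 1)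
    {t : ℝ} (ht : t ∈ Set.Icc (0:ℝ) 1) (n : ℕ) :
    E ^ n * (1 - t^2) ^ n * ((1 - D * t^2) ^ (-((n:ℝ) + 1/2)) : ℝ)
      ≤ (1 - D) ^ (-(1/2 : ℝ)) := by
  have ht2 : t^2 ≤ 1 := by nlinarith [ht.1, ht.2]
  have h1t : (0:ℝ) ≤ 1 - t^2 := by linarith
  have hu0 : (0:ℝ) ≤ D * t^2 := by positivity
  have hu1 : D * t^2 < 1 := by nlinarith
  have hy : (0:ℝ) < 1 - D*t^2 := by linarith
  have hDy : 1 - D ≤ 1 - D*t^2 := by nlinarith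
  have h1D : (0:ℝ) < 1 - D := by linarith
  have hsplit : ((1 - D * t^2) ^ (-((n:ℝ) + 1/2)) : ℝ)
      = ((1 - D*t^2) ^ (n:ℕ))⁻¹ * (1 - D*t^2) ^ (-(1/2:ℝ)) := by
    rw [← Real.rpow_natCast (1 - D*t^2) n, ← Real.rpow_neg hy.le, ← Real.rpow_add hy]
    congr 1
    ring
  rw [hsplit]
  have hE : E ^ n ≤ 1 := pow_le_one₀ hE0 hE1.le
  have hfrac : (1 - t^2) ^ n * ((1 - D*t^2) ^ (n:ℕ))⁻¹ ≤ 1 := by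
    rw [mul_inv_le_iff₀ (by positivity), one_mul]
    apply pow_le_pow_left₀ h1t (by nlinarith)
  have hlast : (1 - D*t^2) ^ (-(1/2:ℝ)) ≤ (1 - D) ^ (-(1/2:ℝ)) :=
    Real.rpow_le_rpow_of_nonpos h1D hDy (by norm_num)
  have hpos1 : (0:ℝ) ≤ (1 - D*t^2) ^ (-(1/2:ℝ)) := (Real.rpow_pos_of_pos hy _).le
  calc E ^ n * (1 - t^2) ^ n * (((1 - D*t^2) ^ (n:ℕ))⁻¹ * (1 - D*t^2) ^ (-(1/2:ℝ)))
      = (E ^ n * ((1 - t^2) ^ n * ((1 - D*t^2) ^ (n:ℕ))⁻¹)) * ((1 - D*t^2) ^ (-(1/2:ℝ))) := by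
        ring
    _ ≤ 1 * 1 * ((1 - D) ^ (-(1/2:ℝ))) := by
        apply mul_le_mul _ hlast hpos1 (by norm_num)
        apply mul_le_mul hE hfrac _ (by norm_num)
        apply mul_nonneg (pow_nonneg h1t n) (by positivity)
    _ = (1 - D) ^ (-(1/2:ℝ)) := by ring

lemma fterm_row_summable {E D : ℝ} (hE0 : 0 ≤ E) (hD0 : 0 ≤ D) (hD1 : D < 1)
    {t : ℝ} (ht : t ∈ Set.Icc (0:ℝ) 1) (n : ℕ) :
    Summable (fun m => |fterm E D (n, m) t|) := by
  apply Summable.of_nonneg_of_le (fun m => abs_nonneg _) (abs_fterm_le hE0 hD0 ht n)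
  exact ((row_hasSum hD0 hD1 ht _).summable.mul_left _)

lemma fterm_rowsum_le {E D : ℝ} (hE0 : 0 ≤ E) (hE1 : E < 1) (hD0 : 0 ≤ D) (hD1 : D < 1)
    {t : ℝ} (ht : t ∈ Set.Icc (0:ℝ) 1) (n : ℕ) :
    ∑' m, |fterm E D (n, m) t| ≤ |Acoef n| * (1 - D) ^ (-(1/2 : ℝ)) := by
  have h1 : ∑' m, |fterm E D (n, m) t|
      ≤ ∑' m, |Acoef n| * E ^ n * (1 - t^2) ^ n
          * (poch ((n:ℝ) + 1/2) m / m.factorial * (D * t^2) ^ m) := by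
    apply Summable.tsum_le_tsum (abs_fterm_le hE0 hD0 ht n) (fterm_row_summable hE0 hD0 hD1 ht n)
    exact ((row_hasSum hD0 hD1 ht _).summable.mul_left _)
  have h2 : ∑' m, |Acoef n| * E ^ n * (1 - t^2) ^ n
          * (poch ((n:ℝ) + 1/2) m / m.factorial * (D * t^2) ^ m)
      = |Acoef n| * E ^ n * (1 - t^2) ^ n * ((1 - D * t^2) ^ (-((n:ℝ) + 1/2)) : ℝ) := by
    rw [tsum_mul_left, (row_hasSum hD0 hD1 ht _).tsum_eq]
  have h3 : |Acoef n| * E ^ n * (1 - t^2) ^ n * ((1 - D * t^2) ^ (-((n:ℝ) + 1/2)) : ℝ)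
      ≤ |Acoef n| * (1 - D) ^ (-(1/2 : ℝ)) := by
    have hbc := bound_core hE0 hE1 hD0 hD1 ht n
    calc |Acoef n| * E ^ n * (1 - t^2) ^ n * ((1 - D * t^2) ^ (-((n:ℝ) + 1/2)) : ℝ)
        = |Acoef n| * (E ^ n * (1 - t^2) ^ n * ((1 - D * t^2) ^ (-((n:ℝ) + 1/2)) : ℝ)) := by ring
      _ ≤ |Acoef n| * ((1 - D) ^ (-(1/2 : ℝ))) :=
          mul_le_mul_of_nonneg_left hbc (abs_nonneg _)
  rw [h2] at h1
  linarith

lemma fterm_abs_summable {E D : ℝ} (hE0 : 0 ≤ E) (hE1 : E < 1) (hD0 : 0 ≤ D) (hD1 : D < 1)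
    {t : ℝ} (ht : t ∈ Set.Icc (0:ℝ) 1) :
    Summable (fun p : ℕ × ℕ => |fterm E D p t|) := by
  have hre : (fun p : ℕ × ℕ => |fterm E D p t|)
      = fun p : ℕ × ℕ => |fterm E D (p.1, p.2) t| := by funext p; rfl
  rw [hre]
  apply (summable_prod_of_nonneg (fun p => abs_nonneg _)).mpr
  constructor
  · exact fun n => fterm_row_summable hE0 hD0 hD1 ht n
  · apply Summable.of_nonneg_of_le (fun n => tsum_nonneg (fun m => abs_nonneg _))
      (fun n => fterm_rowsum_le hE0 hE1 hD0 hD1 ht n)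
    exact summable_abs_Acoef.mul_right _

lemma fterm_summable {E D : ℝ} (hE0 : 0 ≤ E) (hE1 : E < 1) (hD0 : 0 ≤ D) (hD1 : D < 1)
    {t : ℝ} (ht : t ∈ Set.Icc (0:ℝ) 1) :
    Summable (fun p : ℕ × ℕ => fterm E D p t) :=
  (fterm_abs_summable hE0 hE1 hD0 hD1 ht).of_abs

lemma fterm_total_le {E D : ℝ} (hE0 : 0 ≤ E) (hE1 : E < 1) (hD0 : 0 ≤ D) (hD1 : D < 1)
    {t : ℝ} (ht : t ∈ Set.Icc (0:ℝ) 1) :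
    ∑' p : ℕ × ℕ, |fterm E D p t| ≤ (1 - D) ^ (-(1/2 : ℝ)) * ∑' n, |Acoef n| := by
  have habs := fterm_abs_summable hE0 hE1 hD0 hD1 ht
  rw [Summable.tsum_prod habs]
  calc ∑' n, ∑' m, |fterm E D (n, m) t|
      ≤ ∑' n, |Acoef n| * (1 - D) ^ (-(1/2 : ℝ)) := by
        apply Summable.tsum_le_tsum (fun n => fterm_rowsum_le hE0 hE1 hD0 hD1 ht n)
        · exact Summable.congr ((habs.hasSum.prod_fiberwise
            (fun n => ((habs.prod_factor n).hasSum))).summable) (fun n => rfl)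
        · exact summable_abs_Acoef.mul_right _
    _ = (1 - D) ^ (-(1/2 : ℝ)) * ∑' n, |Acoef n| := by
        rw [tsum_mul_right]; ring

lemma expansion {E D : ℝ} (hE0 : 0 ≤ E) (hE1 : E < 1) (hD0 : 0 ≤ D) (hD1 : D < 1)
    {t : ℝ} (ht : t ∈ Set.Icc (0:ℝ) 1) :
    Real.sqrt (1 - D * t^2) * gaussF (1/2) (-(1/2)) 1 (((1 - t^2)/(1 - D * t^2)) * E)
      = ∑' p : ℕ × ℕ, fterm E D p t := by
  have ht2 : t^2 ≤ 1 := by nlinarith [ht.1, ht.2]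
  have h1t : (0:ℝ) ≤ 1 - t^2 := by linarith
  have hu0 : (0:ℝ) ≤ D * t^2 := by positivity
  have hu1 : D * t^2 < 1 := by nlinarith
  have hy : (0:ℝ) < 1 - D*t^2 := by linarith
  set y : ℝ := 1 - D*t^2 with hydef
  set X : ℝ := ((1 - t^2)/y) * E with hXdef
  have hg : gaussF (1/2) (-(1/2)) 1 X = ∑' n : ℕ, Acoef n * X ^ n := rfl
  have step3 : ∀ n : ℕ, Real.sqrt y * (Acoef n * X ^ n)
      = Acoef n * E ^ n * (1 - t^2) ^ n * (y ^ ((1:ℝ)/2 - n)) := by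
    intro n
    have hyn : (0:ℝ) < y ^ n := pow_pos hy n
    have hXn : X ^ n = (1 - t^2)^n * E^n / y^n := by
      rw [hXdef, mul_pow, div_pow]
      ring
    have hrpow : y ^ ((1:ℝ)/2 - n) = Real.sqrt y / y ^ n := by
      rw [Real.rpow_sub hy, Real.rpow_natCast]
      congr 1
      rw [Real.sqrt_eq_rpow]
    rw [hXn, hrpow]
    field_simp
  have step4 : ∀ n : ℕ, (y ^ ((1:ℝ)/2 - n)) 
      = ∑' m : ℕ, poch ((n:ℝ) - 1/2) m / m.factorial * (D * t^2) ^ m := by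
    intro n
    have hbs := binomial_hasSum ((n:ℝ) - 1/2) hu0 hu1
    have h1 : y ^ ((1:ℝ)/2 - n) = (1 - D*t^2) ^ (-((n:ℝ) - 1/2)) := by
      rw [hydef]
      congr 1
      ring
    rw [h1, ← hbs.tsum_eq]
  calc Real.sqrt y * gaussF (1/2) (-(1/2)) 1 X
      = ∑' n : ℕ, Real.sqrt y * (Acoef n * X ^ n) := by
        rw [hg, ← tsum_mul_left]
    _ = ∑' n : ℕ, ∑' m : ℕ, fterm E D (n, m) t := by
        apply tsum_congr
        intro n
        rw [step3 n, step4 n, ← tsum_mul_left]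
        apply tsum_congr
        intro m
        rfl
    _ = ∑' p : ℕ × ℕ, fterm E D p t := by
        rw [Summable.tsum_prod (fterm_summable hE0 hE1 hD0 hD1 ht)]

lemma fterm_continuous (E D : ℝ) (p : ℕ × ℕ) : Continuous (fterm E D p) := by
  unfold fterm
  fun_prop

lemma fterm_integral (E D : ℝ) (p : ℕ × ℕ) :
    ∫ t in Set.Ioc (0:ℝ) 1, fterm E D p t
      = (Acoef p.1 * E ^ p.1 * poch ((p.1:ℝ) - 1/2) p.2 * D ^ p.2 / p.2.factorial)
        * ((p.1.factorial : ℝ) * poch (1/2) p.2 / poch (3/2) (p.1 + p.2)) := by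
  obtain ⟨n, m⟩ := p
  rw [← intervalIntegral.integral_of_le zero_le_one]
  have hfun : ∀ t : ℝ, fterm E D (n, m) t
      = (Acoef n * E ^ n * poch ((n:ℝ) - 1/2) m * D ^ m / m.factorial)
        * (t^(2*m) * (1 - t^2)^n) := by
    intro t
    unfold fterm
    simp only
    rw [mul_pow, ← pow_mul]
    ring
  rw [intervalIntegral.integral_congr (fun t _ => hfun t)]
  rw [intervalIntegral.integral_const_mul, integral_Inm n m]

lemma swap_lemma {E D : ℝ} (hE0 : 0 ≤ E) (hE1 : E < 1) (hD0 : 0 ≤ D) (hD1 : D < 1) :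
    ∫ t in Set.Ioc (0:ℝ) 1, (∑' p : ℕ × ℕ, fterm E D p t)
      = ∑' p : ℕ × ℕ, ∫ t in Set.Ioc (0:ℝ) 1, fterm E D p t := by
  set M := (1 - D) ^ (-(1/2:ℝ)) * ∑' n, |Acoef n| with hM
  apply integral_tsum
  · exact fun p => (fterm_continuous E D p).aestronglyMeasurable
  · have hmeas2 : ∀ p : ℕ × ℕ, AEMeasurable (fun t => (‖fterm E D p t‖₊ : ℝ≥0∞))
        (volume.restrict (Set.Ioc (0:ℝ) 1)) :=
      fun p => ((fterm_continuous E D p).measurable.nnnorm.coe_nnreal_ennreal).aemeasurable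
    simp only [enorm_eq_nnnorm]
    rw [← lintegral_tsum hmeas2]
    have hpt : ∀ t ∈ Set.Ioc (0:ℝ) 1,
        (∑' p : ℕ × ℕ, (‖fterm E D p t‖₊ : ℝ≥0∞)) ≤ ENNReal.ofReal M := by
      intro t ht'
      have ht : t ∈ Set.Icc (0:ℝ) 1 := ⟨ht'.1.le, ht'.2⟩
      have hsum := fterm_abs_summable hE0 hE1 hD0 hD1 ht
      calc ∑' p : ℕ × ℕ, (‖fterm E D p t‖₊ : ℝ≥0∞)
          = ∑' p : ℕ × ℕ, ENNReal.ofReal |fterm E D p t| := by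
            apply tsum_congr
            intro p
            exact Real.enorm_eq_ofReal_abs _
        _ = ENNReal.ofReal (∑' p : ℕ × ℕ, |fterm E D p t|) :=
            (ENNReal.ofReal_tsum_of_nonneg (fun p => abs_nonneg _) hsum).symm
        _ ≤ ENNReal.ofReal M :=
            ENNReal.ofReal_le_ofReal (fterm_total_le hE0 hE1 hD0 hD1 ht)
    have hb : ∫⁻ t in Set.Ioc (0:ℝ) 1, (∑' p : ℕ × ℕ, (‖fterm E D p t‖₊ : ℝ≥0∞))
        ≤ ENNReal.ofReal M * volume (Set.Ioc (0:ℝ) 1) := by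
      rw [← setLIntegral_const (Set.Ioc (0:ℝ) 1) (ENNReal.ofReal M)]
      exact setLIntegral_mono measurable_const hpt
    have hvol : volume (Set.Ioc (0:ℝ) 1) = 1 := by
      rw [Real.volume_Ioc]
      norm_num
    rw [hvol, mul_one] at hb
    exact ne_top_of_le_ne_top ENNReal.ofReal_ne_top hb

lemma tau_eq (E D : ℝ) (p : ℕ × ℕ) :
    (Acoef p.1 * E ^ p.1 * poch ((p.1:ℝ) - 1/2) p.2 * D ^ p.2 / p.2.factorial)
        * ((p.1.factorial : ℝ) * poch (1/2) p.2 / poch (3/2) (p.1 + p.2))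
      = tauTerm E D p := by
  obtain ⟨n, m⟩ := p
  have e : poch (-(1/2)) (n+m) = poch (-(1/2)) n * poch ((n:ℝ) - 1/2) m := by
    rw [poch_add]
    congr 2
    ring
  unfold tauTerm Acoef
  simp only
  rw [poch_one_eq_factorial, e]
  have h1 : (0:ℝ) < poch (3/2) (n+m) := poch_pos (by norm_num) _
  have h2 : (0:ℝ) < (n.factorial : ℝ) := by positivity
  have h3 : (0:ℝ) < (m.factorial : ℝ) := by positivity
  field_simp

lemma abs_gterm_le {γ E D : ℝ} (hE0 : 0 ≤ E) (hD0 : 0 ≤ D) (hγ : 3/2 ≤ γ) (p : ℕ × ℕ) :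
    |gterm γ E D p| ≤ 2 * (E ^ p.1 * D ^ p.2) := by
  obtain ⟨n, m⟩ := p
  set k := n + m with hk
  have hp12 : (0:ℝ) ≤ poch (1/2) k := poch_nonneg (by norm_num) k
  have hp32m : (0:ℝ) ≤ poch (3/2) m := poch_nonneg (by norm_num) m
  have hpγ : (0:ℝ) < poch γ k := poch_pos (by linarith) k
  have hnf : (0:ℝ) < (n.factorial : ℝ) := by positivity
  have hmf : (0:ℝ) < (m.factorial : ℝ) := by positivity
  have f1 : |poch (-(1/2)) n| ≤ (n.factorial : ℝ) := by
    have := abs_poch_le (s := -(1/2)) (s' := 1) (by rw [abs_le]; norm_num) n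
    rwa [poch_one_eq_factorial] at this
  have f2 : poch (3/2) m ≤ 2 * ((m:ℝ)+1) * m.factorial := by
    have h1 : poch (1/2) (m+1) = 1/2 * poch (3/2) m := by
      rw [poch_succ']; norm_num
    have h2 : poch (1/2) (m+1) ≤ poch 1 (m+1) := poch_le_poch (by norm_num) (by norm_num) _
    rw [poch_one_eq_factorial] at h2
    have h3 : ((m+1).factorial : ℝ) = ((m:ℝ)+1) * m.factorial := by
      push_cast [Nat.factorial_succ]; ring
    rw [h3] at h2
    linarith [h1 ▸ h2]
  have f3 : poch (1/2) k * ((m:ℝ)+1) ≤ poch γ k := by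
    have h1 := poch_half_ratio k
    have h2 : poch (3/2) k ≤ poch γ k := poch_le_poch (by norm_num) hγ k
    have hmk : (m:ℝ) + 1 ≤ 2 * (1/2 + k) := by
      have : (m:ℝ) ≤ (k:ℝ) := by
        rw [hk]; push_cast; linarith [Nat.cast_nonneg (α := ℝ) n]
      linarith
    calc poch (1/2) k * ((m:ℝ)+1) ≤ poch (1/2) k * (2 * (1/2 + k)) :=
          mul_le_mul_of_nonneg_left hmk hp12
      _ = 2 * (poch (1/2) k * (1/2 + k)) := by ring
      _ = 2 * (1/2 * poch (3/2) k) := by rw [h1]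
      _ = poch (3/2) k := by ring
      _ ≤ poch γ k := h2
  have hN : |poch (1/2) k * poch (-(1/2)) n * poch (3/2) m|
      ≤ 2 * (poch γ k * n.factorial * m.factorial) := by
    rw [abs_mul, abs_mul, abs_of_nonneg hp12, abs_of_nonneg hp32m]
    calc poch (1/2) k * |poch (-(1/2)) n| * poch (3/2) m
        ≤ poch (1/2) k * (n.factorial : ℝ) * (2 * ((m:ℝ)+1) * m.factorial) := by
          apply mul_le_mul (mul_le_mul_of_nonneg_left f1 hp12) f2 hp32m
          positivity
      _ = 2 * ((n.factorial : ℝ) * (m.factorial:ℝ)) * (poch (1/2) k * ((m:ℝ)+1)) := by ring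
      _ ≤ 2 * ((n.factorial : ℝ) * (m.factorial:ℝ)) * poch γ k :=
          mul_le_mul_of_nonneg_left f3 (by positivity)
      _ = 2 * (poch γ k * n.factorial * m.factorial) := by ring
  have hgabs : |gterm γ E D (n, m)|
      = |poch (1/2) k * poch (-(1/2)) n * poch (3/2) m|
        / (poch γ k * n.factorial * m.factorial) * (E ^ n * D ^ m) := by
    unfold gterm
    simp only
    rw [abs_mul, abs_mul, abs_div]
    rw [abs_of_nonneg (pow_nonneg hE0 n), abs_of_nonneg (pow_nonneg hD0 m),
      abs_of_pos (by positivity : (0:ℝ) < poch γ (n+m) * n.factorial * m.factorial)]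
    ring
  rw [hgabs]
  have hdiv : |poch (1/2) k * poch (-(1/2)) n * poch (3/2) m|
      / (poch γ k * n.factorial * m.factorial) ≤ 2 := by
    rw [div_le_iff₀ (by positivity)]
    linarith
  calc _ ≤ 2 * (E ^ n * D ^ m) :=
        mul_le_mul_of_nonneg_right hdiv (by positivity)
    _ = 2 * (E ^ n * D ^ m) := rfl

lemma summable_ED {E D : ℝ} (hE0 : 0 ≤ E) (hE1 : E < 1) (hD0 : 0 ≤ D) (hD1 : D < 1) :
    Summable (fun p : ℕ × ℕ => E ^ p.1 * D ^ p.2) := by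
  have hE : Summable (fun n : ℕ => E ^ n) :=
    summable_geometric_of_lt_one hE0 hE1
  have hD : Summable (fun m : ℕ => D ^ m) :=
    summable_geometric_of_lt_one hD0 hD1
  exact hE.mul_of_nonneg hD (fun n => pow_nonneg hE0 n) (fun m => pow_nonneg hD0 m)

lemma summable_gterm {γ E D : ℝ} (hE0 : 0 ≤ E) (hE1 : E < 1) (hD0 : 0 ≤ D) (hD1 : D < 1)
    (hγ : 3/2 ≤ γ) : Summable (gterm γ E D) := by
  apply Summable.of_abs
  apply Summable.of_nonneg_of_le (fun p => abs_nonneg _) (abs_gterm_le hE0 hD0 hγ)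
  exact (summable_ED hE0 hE1 hD0 hD1).mul_left 2

lemma abs_tau_le {E D : ℝ} (hE0 : 0 ≤ E) (hD0 : 0 ≤ D) (p : ℕ × ℕ) :
    |tauTerm E D p| ≤ E ^ p.1 * D ^ p.2 := by
  obtain ⟨n, m⟩ := p
  set k := n + m with hk
  have hp32 : (0:ℝ) < poch (3/2) k := poch_pos (by norm_num) k
  have hnf : (0:ℝ) < (n.factorial : ℝ) := by positivity
  have hmf : (0:ℝ) < (m.factorial : ℝ) := by positivity
  have f1 : |poch (-(1/2)) k| ≤ poch (3/2) k := by
    calc |poch (-(1/2)) k| ≤ poch (1/2) k := abs_poch_le (by rw [abs_le]; norm_num) k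
      _ ≤ poch (3/2) k := poch_le_poch (by norm_num) (by norm_num) k
  have f2 : poch (1/2) n ≤ (n.factorial : ℝ) := by
    have := poch_le_poch (a := 1/2) (b := 1) (by norm_num) (by norm_num) n
    rwa [poch_one_eq_factorial] at this
  have f3 : poch (1/2) m ≤ (m.factorial : ℝ) := by
    have := poch_le_poch (a := 1/2) (b := 1) (by norm_num) (by norm_num) m
    rwa [poch_one_eq_factorial] at this
  have hp12n : (0:ℝ) ≤ poch (1/2) n := poch_nonneg (by norm_num) n
  have hp12m : (0:ℝ) ≤ poch (1/2) m := poch_nonneg (by norm_num) m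
  have htabs : |tauTerm E D (n, m)|
      = poch (1/2) n * |poch (-(1/2)) k| * poch (1/2) m
        / (poch (3/2) k * n.factorial * m.factorial) * (E ^ n * D ^ m) := by
    unfold tauTerm
    simp only
    rw [abs_mul, abs_mul, abs_div, abs_mul, abs_mul]
    rw [abs_of_nonneg (pow_nonneg hE0 n), abs_of_nonneg (pow_nonneg hD0 m),
      abs_of_nonneg hp12n, abs_of_nonneg hp12m,
      abs_of_pos (by positivity : (0:ℝ) < poch (3/2) (n+m) * n.factorial * m.factorial)]
    ring
  rw [htabs]
  have hdiv : poch (1/2) n * |poch (-(1/2)) k| * poch (1/2) m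
      / (poch (3/2) k * n.factorial * m.factorial) ≤ 1 := by
    rw [div_le_one (by positivity)]
    calc poch (1/2) n * |poch (-(1/2)) k| * poch (1/2) m
        ≤ (n.factorial : ℝ) * poch (3/2) k * (m.factorial : ℝ) := by
          apply mul_le_mul _ f3 hp12m (by positivity)
          apply mul_le_mul f2 f1 (abs_nonneg _) hnf.le
      _ = poch (3/2) k * n.factorial * m.factorial := by ring
  nlinarith [mul_le_mul_of_nonneg_right hdiv
    (by positivity : (0:ℝ) ≤ E ^ n * D ^ m)]

lemma summable_tau {E D : ℝ} (hE0 : 0 ≤ E) (hE1 : E < 1) (hD0 : 0 ≤ D) (hD1 : D < 1) :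
    Summable (tauTerm E D) := by
  apply Summable.of_abs
  apply Summable.of_nonneg_of_le (fun p => abs_nonneg _) (abs_tau_le hE0 hD0)
  exact summable_ED hE0 hE1 hD0 hD1

lemma tau_zero_eq (E D : ℝ) (n : ℕ) : tauTerm E D (n, 0) = gterm (3/2) E D (n, 0) := by
  unfold tauTerm gterm
  simp [poch_zero]

set_option maxHeartbeats 2000000 in
lemma shift_identity (E D : ℝ) (n m : ℕ) :
    tauTerm E D (n, m+1)
      = gterm (3/2) E D (n, m+1) - D * gterm (3/2) E D (n, m)
        + (D/3) * gterm (5/2) E D (n, m) := by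
  have h := coeff_id n m
  unfold tauTerm gterm
  simp only
  linear_combination (E ^ n * D ^ (m+1)) * h

set_option maxHeartbeats 2000000 in
lemma inner_eq {E D : ℝ} (hE0 : 0 ≤ E) (hE1 : E < 1) (hD0 : 0 ≤ D) (hD1 : D < 1) (n : ℕ) :
    ∑' m, tauTerm E D (n, m)
      = (1 - D) * ∑' m, gterm (3/2) E D (n, m) + (D/3) * ∑' m, gterm (5/2) E D (n, m) := by
  have hτrow : Summable (fun m => tauTerm E D (n, m)) :=
    (summable_tau hE0 hE1 hD0 hD1).prod_factor n
  have hg3row : Summable (fun m => gterm (3/2) E D (n, m)) :=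
    (summable_gterm hE0 hE1 hD0 hD1 (by norm_num)).prod_factor n
  have hg5row : Summable (fun m => gterm (5/2) E D (n, m)) :=
    (summable_gterm hE0 hE1 hD0 hD1 (by norm_num)).prod_factor n
  have s1 : Summable (fun m => gterm (3/2) E D (n, m+1)) :=
    (summable_nat_add_iff 1).mpr hg3row
  have h1 : ∑' m, tauTerm E D (n, m)
      = tauTerm E D (n, 0) + ∑' m, tauTerm E D (n, m+1) := Summable.tsum_eq_zero_add hτrow
  have h2 : ∑' m, gterm (3/2) E D (n, m)
      = gterm (3/2) E D (n, 0) + ∑' m, gterm (3/2) E D (n, m+1) := Summable.tsum_eq_zero_add hg3row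
  have h3 : ∑' m, tauTerm E D (n, m+1)
      = ∑' m, (gterm (3/2) E D (n, m+1) - D * gterm (3/2) E D (n, m)
          + (D/3) * gterm (5/2) E D (n, m)) := tsum_congr (fun m => shift_identity E D n m)
  have h4 : ∑' m, (gterm (3/2) E D (n, m+1) - D * gterm (3/2) E D (n, m)
          + (D/3) * gterm (5/2) E D (n, m))
      = (∑' m, gterm (3/2) E D (n, m+1)) - D * (∑' m, gterm (3/2) E D (n, m))
        + (D/3) * (∑' m, gterm (5/2) E D (n, m)) := by
    rw [Summable.tsum_add (s1.sub (hg3row.mul_left D)) (hg5row.mul_left (D/3)),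
      Summable.tsum_sub s1 (hg3row.mul_left D), tsum_mul_left, tsum_mul_left]
  rw [h1, h3, h4, tau_zero_eq]
  rw [h2]
  ring

lemma final_algebra {E D : ℝ} (hE0 : 0 ≤ E) (hE1 : E < 1) (hD0 : 0 ≤ D) (hD1 : D < 1) :
    ∑' p : ℕ × ℕ, tauTerm E D p
      = (1 - D) * (∑' p : ℕ × ℕ, gterm (3/2) E D p)
        + (D/3) * (∑' p : ℕ × ℕ, gterm (5/2) E D p) := by
  have hτ := summable_tau hE0 hE1 hD0 hD1
  have hg3 := summable_gterm hE0 hE1 hD0 hD1 (γ := 3/2) (by norm_num)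
  have hg5 := summable_gterm hE0 hE1 hD0 hD1 (γ := 5/2) (by norm_num)
  have S3out : Summable (fun n => ∑' m, gterm (3/2) E D (n, m)) :=
    (hg3.hasSum.prod_fiberwise (fun n => (hg3.prod_factor n).hasSum)).summable
  have S5out : Summable (fun n => ∑' m, gterm (5/2) E D (n, m)) :=
    (hg5.hasSum.prod_fiberwise (fun n => (hg5.prod_factor n).hasSum)).summable
  rw [Summable.tsum_prod hτ, Summable.tsum_prod hg3, Summable.tsum_prod hg5]
  rw [← tsum_mul_left, ← tsum_mul_left,
    ← Summable.tsum_add (S3out.mul_left (1-D)) (S5out.mul_left (D/3))]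
  exact tsum_congr (fun n => inner_eq hE0 hE1 hD0 hD1 n)

theorem main_general {E D : ℝ} (hE0 : 0 ≤ E) (hE1 : E < 1) (hD0 : 0 ≤ D) (hD1 : D < 1) :
    (∫ t in (0:ℝ)..1, Real.sqrt (1 - D * t^2) *
        gaussF (1/2) (-(1/2)) 1 (((1 - t^2)/(1 - D * t^2)) * E))
      = (1 - D) * appellF1 (1/2) (-(1/2)) (3/2) (3/2) E D
        + (D/3) * appellF1 (1/2) (-(1/2)) (3/2) (5/2) E D := by
  have happ3 : appellF1 (1/2) (-(1/2)) (3/2) (3/2) E D = ∑' p : ℕ × ℕ, gterm (3/2) E D p := rfl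
  have happ5 : appellF1 (1/2) (-(1/2)) (3/2) (5/2) E D = ∑' p : ℕ × ℕ, gterm (5/2) E D p := rfl
  rw [intervalIntegral.integral_of_le zero_le_one]
  rw [setIntegral_congr_fun measurableSet_Ioc
    (fun t ht => expansion hE0 hE1 hD0 hD1 (Set.Ioc_subset_Icc_self ht))]
  rw [swap_lemma hE0 hE1 hD0 hD1]
  rw [tsum_congr (fun p => (fterm_integral E D p).trans (tau_eq E D p))]
  rw [final_algebra hE0 hE1 hD0 hD1, happ3, happ5]


/-- For `a > b > c > 0`, with `ε = 1 - c²/b²`, `δ = 1 - c²/a²`: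
`∫₀¹ √(1-δt²)·₂F₁(1/2,-1/2;1;((1-t²)/(1-δt²))·ε) dt
  = (1-δ)·F₁(1/2;-1/2,3/2;3/2;ε,δ) + (δ/3)·F₁(1/2;-1/2,3/2;5/2;ε,δ)`. -/
theorem integral_gaussF_eq_appell (a b c : ℝ) (hc : 0 < c) (hcb : c < b) (hba : b < a) :
    (∫ t in (0:ℝ)..1, Real.sqrt (1 - (1 - c^2/a^2) * t^2) *
        gaussF (1/2) (-(1/2)) 1 (((1 - t^2)/(1 - (1 - c^2/a^2) * t^2)) * (1 - c^2/b^2)))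
      = (1 - (1 - c^2/a^2)) * appellF1 (1/2) (-(1/2)) (3/2) (3/2) (1 - c^2/b^2) (1 - c^2/a^2)
        + ((1 - c^2/a^2)/3) * appellF1 (1/2) (-(1/2)) (3/2) (5/2) (1 - c^2/b^2) (1 - c^2/a^2) := by
  have hb : 0 < b := hc.trans hcb
  have ha : 0 < a := hb.trans hba
  have hE0 : 0 ≤ 1 - c^2/b^2 := by
    have h1 : c^2/b^2 ≤ 1 := by
      rw [div_le_one (by positivity)]
      nlinarith
    linarith
  have hE1 : 1 - c^2/b^2 < 1 := by
    have h1 : 0 < c^2/b^2 := by positivity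
    linarith
  have hD0 : 0 ≤ 1 - c^2/a^2 := by
    have h1 : c^2/a^2 ≤ 1 := by
      rw [div_le_one (by positivity)]
      nlinarith
    linarith
  have hD1 : 1 - c^2/a^2 < 1 := by
    have h1 : 0 < c^2/a^2 := by positivity
    linarith
  exact main_general hE0 hE1 hD0 hD1
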